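/- arXiv:1503.06684 — 2 statements merged into one kernel-verified Lean document; each statement's English description precedes it below -/
import Mathlib

section
/- Let γ > 1 be real. For every δ > 0 there exists a constant C_δ > 0 with the following property: for every measure space (X, 𝔐, μ) with μ(X) < ∞ and every measurable function ρ : X → [0,∞), the inequality ∫_X |ρ(x) − 1|^γ dμ(x) ≤ C_δ·∫_X P(ρ(x)) dμ(x) + δ^γ·μ(X) holds (the integrals being interpreted as integrals of nonnegative measurable functions, possibly infinite). -/
open MeasureTheory

universe u

section Aux
open Real

lemma ptwise (γ : ℝ) (hγ : 1 < γ) (δ : ℝ) (hδ : 0 < δ) (hδ2 : δ ≤ 1/2) :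
    ∃ C : ℝ, 0 < C ∧ ∀ r : ℝ, 0 ≤ r →
      |r - 1| ^ γ ≤ C * (r ^ γ - 1 - γ * (r - 1)) + δ ^ γ := by
  have hγ0 : (0:ℝ) < γ := by linarith
  -- P ≥ 0 on [0,∞)
  have hP0 : ∀ r : ℝ, 0 ≤ r → 0 ≤ r ^ γ - 1 - γ * (r - 1) := by
    intro r hr
    have := one_add_mul_self_le_rpow_one_add (s := r - 1) (by linarith) hγ.le
    have h1 : (1 + (r-1) : ℝ) = r := by ring
    rw [h1] at this; linarith
  -- P(1-δ) > 0 and P(1+δ) > 0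
  have hPm : 0 < (1-δ) ^ γ - 1 - γ * ((1-δ) - 1) := by
    have := one_add_mul_self_lt_rpow_one_add (s := -δ) (by linarith) (by linarith) hγ
    have h1 : (1 + -δ : ℝ) = 1 - δ := by ring
    rw [h1] at this; linarith
  have hPp : 0 < (1+δ) ^ γ - 1 - γ * ((1+δ) - 1) := by
    have := one_add_mul_self_lt_rpow_one_add (s := δ) (by linarith) (by linarith) hγ
    linarith
  set m : ℝ := min ((1-δ) ^ γ - 1 - γ * ((1-δ) - 1)) ((1+δ) ^ γ - 1 - γ * ((1+δ) - 1)) with hm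
  have hm0 : 0 < m := lt_min hPm hPp
  set R : ℝ := max 2 ((2*(1+γ)) ^ (1/(γ-1))) with hR
  have hR2 : (2:ℝ) ≤ R := le_max_left _ _
  have hR0 : (0:ℝ) < R := by linarith
  have hRγ : 0 < R ^ γ := rpow_pos_of_pos hR0 γ
  refine ⟨max 2 (R ^ γ / m), lt_of_lt_of_le two_pos (le_max_left _ _), ?_⟩
  intro r hr
  set C : ℝ := max 2 (R ^ γ / m) with hC
  have hC2 : (2:ℝ) ≤ C := le_max_left _ _
  have hCm : R ^ γ / m ≤ C := le_max_right _ _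
  have hPr := hP0 r hr
  by_cases hcase : |r - 1| ≤ δ
  · -- small fluctuation
    have h1 : |r-1| ^ γ ≤ δ ^ γ := rpow_le_rpow (abs_nonneg _) hcase hγ0.le
    nlinarith [mul_nonneg (by linarith : (0:ℝ) ≤ C) hPr]
  · push_neg at hcase
    by_cases hbig : r ≤ R
    · -- medium region: use convexity, P(r) ≥ m
      have hPm' : m ≤ r ^ γ - 1 - γ * (r - 1) := by
        rcases lt_or_ge r 1 with h1 | h1
        · -- r ≤ 1 - δ
          have hrd : r ≤ 1 - δ := by
            have : 1 - r > δ := by rw [abs_sub_comm, abs_of_pos (by linarith)] at hcase; linarith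
            linarith
          set a : ℝ := δ / (1 - r) with ha
          have h1r : 0 < 1 - r := by linarith
          have ha0 : 0 < a := div_pos hδ h1r
          have ha1 : a ≤ 1 := (div_le_one h1r).2 (by linarith)
          have key := (convexOn_rpow hγ.le).2 (Set.mem_Ici.2 hr) (Set.mem_Ici.2 (zero_le_one))
            ha0.le (by linarith : (0:ℝ) ≤ 1 - a) (by ring)
          simp only [smul_eq_mul, mul_one, one_rpow] at key
          have haa : a * r + (1 - a) = 1 - δ := by
            have h' := div_mul_cancel₀ δ h1r.ne'; rw [← ha] at h'; linear_combination -h'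
          rw [haa] at key
          -- P(1-δ) ≤ a * P(r) ≤ P(r)
          have har : a * (1 - r) = δ := by rw [ha]; exact div_mul_cancel₀ δ h1r.ne'
          have e : a * (r ^ γ - 1 - γ*(r-1)) = a * r ^ γ - a + γ * δ := by
            linear_combination γ * har
          have h2 : (1-δ)^γ - 1 - γ*((1-δ)-1) ≤ a * (r ^ γ - 1 - γ*(r-1)) := by
            rw [e]; linarith
          have h3 : a * (r ^ γ - 1 - γ*(r-1)) ≤ r ^ γ - 1 - γ*(r-1) :=
            mul_le_of_le_one_left hPr ha1
          calc m ≤ (1-δ)^γ - 1 - γ*((1-δ)-1) := min_le_left _ _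
            _ ≤ _ := le_trans h2 h3
        · -- r ≥ 1 + δ
          have hrd : 1 + δ ≤ r := by
            rw [abs_of_nonneg (by linarith)] at hcase; linarith
          set a : ℝ := δ / (r - 1) with ha
          have h1r : 0 < r - 1 := by linarith
          have ha0 : 0 < a := div_pos hδ h1r
          have ha1 : a ≤ 1 := (div_le_one h1r).2 (by linarith)
          have key := (convexOn_rpow hγ.le).2 (Set.mem_Ici.2 hr) (Set.mem_Ici.2 (zero_le_one))
            ha0.le (by linarith : (0:ℝ) ≤ 1 - a) (by ring)
          simp only [smul_eq_mul, mul_one, one_rpow] at key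
          have haa : a * r + (1 - a) = 1 + δ := by have h' := div_mul_cancel₀ δ h1r.ne'; rw [← ha] at h'; linear_combination h'
          rw [haa] at key
          have har : a * (r - 1) = δ := by rw [ha]; exact div_mul_cancel₀ δ h1r.ne'
          have e : a * (r ^ γ - 1 - γ*(r-1)) = a * r ^ γ - a - γ * δ := by
            linear_combination -γ * har
          have h2 : (1+δ)^γ - 1 - γ*((1+δ)-1) ≤ a * (r ^ γ - 1 - γ*(r-1)) := by
            rw [e]; linarith
          have h3 : a * (r ^ γ - 1 - γ*(r-1)) ≤ r ^ γ - 1 - γ*(r-1) :=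
            mul_le_of_le_one_left hPr ha1
          calc m ≤ (1+δ)^γ - 1 - γ*((1+δ)-1) := min_le_right _ _
            _ ≤ _ := le_trans h2 h3
      have habs : |r - 1| ≤ R := by
        rw [abs_le]; constructor <;> linarith
      have h1 : |r-1| ^ γ ≤ R ^ γ := rpow_le_rpow (abs_nonneg _) habs hγ0.le
      have h2 : R ^ γ ≤ (R ^ γ / m) * (r ^ γ - 1 - γ * (r - 1)) := by
        rw [div_mul_eq_mul_div, le_div_iff₀ hm0]
        exact mul_le_mul_of_nonneg_left hPm' hRγ.le
      have h3 : (R ^ γ / m) * (r ^ γ - 1 - γ * (r - 1)) ≤ C * (r ^ γ - 1 - γ * (r - 1)) :=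
        mul_le_mul_of_nonneg_right hCm hPr
      have hd : 0 ≤ δ ^ γ := rpow_nonneg hδ.le γ
      linarith
    · -- large r: P(r) ≥ r^γ / 2
      push_neg at hbig
      have hr2 : (2:ℝ) ≤ r := by linarith
      have h0 : (0:ℝ) < 2*(1+γ) := by linarith
      have hrpow : 2*(1+γ) ≤ r ^ (γ-1) := by
        have hb := rpow_le_rpow (rpow_nonneg h0.le _)
          (le_trans (le_max_right 2 ((2*(1+γ)) ^ (1/(γ-1)))) hbig.le)
          (by linarith : (0:ℝ) ≤ γ - 1)
        rwa [← rpow_mul h0.le, one_div_mul_cancel (by linarith : γ - 1 ≠ 0), rpow_one] at hb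
      have hsplit : r ^ γ = r ^ (γ-1) * r := by
        rw [← rpow_add_one (by linarith : r ≠ 0) (γ-1)]; ring_nf
      have hrg : 2*(1+γ)*r ≤ r ^ γ := by
        rw [hsplit]; nlinarith
      have h1 : |r-1| ^ γ ≤ r ^ γ := by
        refine rpow_le_rpow (abs_nonneg _) ?_ (by linarith)
        rw [abs_of_nonneg (by linarith)]; linarith
      have h2 : r ^ γ ≤ 2 * (r ^ γ - 1 - γ * (r - 1)) := by nlinarith [hrg]
      have h3 : 2 * (r ^ γ - 1 - γ * (r - 1)) ≤ C * (r ^ γ - 1 - γ * (r - 1)) :=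
        mul_le_mul_of_nonneg_right hC2 hPr
      have hd : 0 ≤ δ ^ γ := rpow_nonneg hδ.le γ
      linarith

end Aux

/-- Let `γ > 1` be real and `P ρ = ρ^γ - 1 - γ*(ρ - 1)`. For every
`δ > 0` there exists `C_δ > 0` such that for every finite measure space `(X, 𝔐, μ)`
and every measurable `ρ : X → [0, ∞)`,
`∫ |ρ - 1|^γ dμ ≤ C_δ * ∫ P(ρ) dμ + δ^γ * μ(X)`,
the integrals being interpreted as (possibly infinite) integrals of nonnegative
measurable functions. -/
theorem integral_density_fluctuation_bound (γ : ℝ) (hγ : 1 < γ) :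
    ∀ δ : ℝ, 0 < δ → ∃ C : ℝ, 0 < C ∧
      ∀ (X : Type u) [MeasurableSpace X] (μ : Measure X), IsFiniteMeasure μ →
        ∀ ρ : X → ℝ, Measurable ρ → (∀ x, 0 ≤ ρ x) →
          (∫⁻ x, ENNReal.ofReal (|ρ x - 1| ^ γ) ∂μ) ≤
            ENNReal.ofReal C * (∫⁻ x, ENNReal.ofReal (ρ x ^ γ - 1 - γ * (ρ x - 1)) ∂μ)
              + ENNReal.ofReal (δ ^ γ) * μ Set.univ := by
  intro δ hδ
  set δ' : ℝ := min δ (1/2) with hδ'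
  have hδ'0 : 0 < δ' := lt_min hδ one_half_pos
  obtain ⟨C, hC0, hC⟩ := ptwise γ hγ δ' hδ'0 (min_le_right _ _)
  refine ⟨C, hC0, ?_⟩
  intro X _ μ _ ρ hρ hρ0
  have hδγ : ENNReal.ofReal (δ' ^ γ) ≤ ENNReal.ofReal (δ ^ γ) :=
    ENNReal.ofReal_le_ofReal
      (Real.rpow_le_rpow hδ'0.le (min_le_left _ _) (by linarith : (0:ℝ) ≤ γ))
  calc ∫⁻ x, ENNReal.ofReal (|ρ x - 1| ^ γ) ∂μ
      ≤ ∫⁻ x, (ENNReal.ofReal C * ENNReal.ofReal (ρ x ^ γ - 1 - γ * (ρ x - 1))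
          + ENNReal.ofReal (δ' ^ γ)) ∂μ := by
        refine lintegral_mono fun x => ?_
        calc ENNReal.ofReal (|ρ x - 1| ^ γ)
            ≤ ENNReal.ofReal (C * (ρ x ^ γ - 1 - γ * (ρ x - 1)) + δ' ^ γ) :=
              ENNReal.ofReal_le_ofReal (hC (ρ x) (hρ0 x))
          _ ≤ ENNReal.ofReal (C * (ρ x ^ γ - 1 - γ * (ρ x - 1)))
              + ENNReal.ofReal (δ' ^ γ) := ENNReal.ofReal_add_le
          _ = ENNReal.ofReal C * ENNReal.ofReal (ρ x ^ γ - 1 - γ * (ρ x - 1))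
              + ENNReal.ofReal (δ' ^ γ) := by rw [ENNReal.ofReal_mul hC0.le]
    _ = ENNReal.ofReal C * (∫⁻ x, ENNReal.ofReal (ρ x ^ γ - 1 - γ * (ρ x - 1)) ∂μ)
          + ENNReal.ofReal (δ' ^ γ) * μ Set.univ := by
        rw [lintegral_add_right _ measurable_const, lintegral_const,
          lintegral_const_mul' _ _ ENNReal.ofReal_ne_top]
    _ ≤ ENNReal.ofReal C * (∫⁻ x, ENNReal.ofReal (ρ x ^ γ - 1 - γ * (ρ x - 1)) ∂μ)
          + ENNReal.ofReal (δ ^ γ) * μ Set.univ :=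
        add_le_add_right (mul_le_mul_left hδγ _) _
end

section
/- Let X be a Polish space with a complete metric d and its Borel σ-algebra, let (Ω, 𝓕, ℙ) be a probability space, and let (Y_n)_{n∈ℕ} be a sequence of X-valued Borel random variables. Then the following are equivalent: (1) there exists an X-valued random variable Y such that for every ε > 0, ℙ(d(Y_n, Y) > ε) → 0 as n → ∞ (i.e. Y_n converges in probability); (2) for every pair of strictly increasing sequences (n_k), (m_k) of natural numbers there exists a subsequence (k_j) such that the joint laws of (Y_{n_{k_j}}, Y_{m_{k_j}}) on X × X converge weakly (i.e. integrals of every bounded continuous function on X × X converge) to a probability measure μ on X × X satisfying μ({(x, y) ∈ X × X : x = y}) = 1. -/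
open MeasureTheory Filter ENNReal Topology

lemma gk_tim {Ω X : Type*} [MeasurableSpace Ω] [MetricSpace X]
    (P : Measure Ω) (f : ℕ → Ω → X) (g : Ω → X)
    (h : ∀ ε : ℝ, 0 < ε → Tendsto (fun n => P {ω | ε < dist (f n ω) (g ω)}) atTop (nhds 0)) :
    TendstoInMeasure P f atTop g := by
  rw [tendstoInMeasure_iff_dist]
  intro ε hε
  refine tendsto_of_tendsto_of_tendsto_of_le_of_le tendsto_const_nhds
    (h (ε/2) (by linarith)) (fun n => zero_le) fun n => measure_mono fun ω hω => ?_
  simp only [Set.mem_setOf_eq] at *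
  linarith

lemma gk_tim' {Ω X : Type*} [MeasurableSpace Ω] [MetricSpace X]
    (P : Measure Ω) (f : ℕ → Ω → X) (g : Ω → X)
    (h : TendstoInMeasure P f atTop g) (ε : ℝ) (hε : 0 < ε) :
    Tendsto (fun n => P {ω | ε < dist (f n ω) (g ω)}) atTop (nhds 0) := by
  refine tendsto_of_tendsto_of_tendsto_of_le_of_le tendsto_const_nhds
    (tendstoInMeasure_iff_dist.mp h ε hε) (fun n => zero_le) fun n => measure_mono fun ω hω => le_of_lt (Set.mem_setOf_eq ▸ hω)

lemma gk_exists_limit {Ω X : Type*} [MeasurableSpace Ω] [MetricSpace X]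
    [CompleteSpace X] [MeasurableSpace X] [BorelSpace X] [SecondCountableTopology X]
    (P : Measure Ω) [IsProbabilityMeasure P] (Y : ℕ → Ω → X) (hY : ∀ n, Measurable (Y n))
    (H : ∀ ε : ℝ, 0 < ε → ∀ δ : ℝ≥0∞, 0 < δ → ∃ N, ∀ p, N ≤ p → ∀ q, N ≤ q →
      P {ω | ε < dist (Y p ω) (Y q ω)} < δ) :
    ∃ Ylim : Ω → X, Measurable Ylim ∧ TendstoInMeasure P Y atTop Ylim := by
  -- choose thresholds
  have Hk : ∀ j : ℕ, ∃ N, ∀ p, N ≤ p → ∀ q, N ≤ q →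
      P {ω | (1/2 : ℝ)^j < dist (Y p ω) (Y q ω)} < (2⁻¹ : ℝ≥0∞)^j := by
    intro j
    exact H ((1/2)^j) (by positivity) ((2⁻¹)^j)
      (ENNReal.pow_pos (by simp) j)
  choose N hN using Hk
  -- strictly increasing sequence φ with φ j ≥ N j
  let φ : ℕ → ℕ := fun j => Nat.rec (N 0) (fun j ih => max (N (j+1)) (ih + 1)) j
  have hφsucc : ∀ j, φ j < φ (j+1) := fun j =>
    lt_of_lt_of_le (Nat.lt_succ_self _) (le_max_right _ _)
  have hφmono : StrictMono φ := strictMono_nat_of_lt_succ hφsucc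
  have hφN : ∀ j, N j ≤ φ j := by
    intro j; cases j with
    | zero => exact le_refl _
    | succ j => exact le_max_left _ _
  set s : ℕ → Set Ω := fun j => {ω | (1/2 : ℝ)^j < dist (Y (φ (j+1)) ω) (Y (φ j) ω)} with hs
  have hsmall : ∀ j, P (s j) ≤ (2⁻¹ : ℝ≥0∞)^j := fun j =>
    le_of_lt (hN j _ (le_trans (hφN j) (le_of_lt (hφsucc j))) _ (hφN j))
  have htsum : ∑' j, P (s j) ≠ ∞ := by
    refine ne_top_of_le_ne_top ?_ (ENNReal.tsum_le_tsum hsmall)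
    rw [ENNReal.tsum_geometric]
    simp [ENNReal.one_sub_inv_two]
  have hBC : P (limsup s atTop) = 0 := measure_limsup_atTop_eq_zero htsum
  have hae : ∀ᵐ ω ∂P, ∃ x, Tendsto (fun j => Y (φ j) ω) atTop (𝓝 x) := by
    rw [ae_iff]
    refine measure_mono_null ?_ hBC
    intro ω hω
    -- ω such that the subsequence does not converge; show ω ∈ limsup s
    by_contra hmem
    apply hω
    have hnot : ∃ K, ∀ j, K ≤ j → ω ∉ s j := by
      by_contra hK
      push_neg at hK
      exact hmem (by
        simp only [limsup_eq_iInf_iSup_of_nat, Set.iInf_eq_iInter, Set.iSup_eq_iUnion,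
          Set.mem_iInter, Set.mem_iUnion, exists_prop]
        intro n
        obtain ⟨j, hj, hjs⟩ := hK n
        exact ⟨j, hj, hjs⟩)
    obtain ⟨K, hK⟩ := hnot
    have hcauchy : CauchySeq (fun j => Y (φ (j + K)) ω) := by
      apply cauchySeq_of_le_geometric (1/2) ((1/2)^K) (by norm_num)
      intro j
      have hidx : j + 1 + K = j + K + 1 := by omega
      rw [hidx]
      have := hK (j + K) (Nat.le_add_left _ _)
      simp only [hs, Set.mem_setOf_eq, not_lt] at this
      rw [dist_comm] at this
      calc dist (Y (φ (j + K)) ω) (Y (φ (j + K + 1)) ω) ≤ (1/2 : ℝ)^(j+K) := this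
        _ = (1/2)^K * (1/2)^j := by rw [pow_add]; ring
    obtain ⟨x, hx⟩ := cauchySeq_tendsto_of_complete hcauchy
    exact ⟨x, (tendsto_add_atTop_iff_nat K).mp hx⟩
  obtain ⟨Ylim, hYlim_meas, hYlim_tendsto⟩ :=
    measurable_limit_of_tendsto_metrizable_ae (fun j => (hY (φ j)).aemeasurable) hae
  refine ⟨Ylim, hYlim_meas, ?_⟩
  have htimsub : TendstoInMeasure P (fun j => Y (φ j)) atTop Ylim :=
    tendstoInMeasure_of_tendsto_ae (fun j => (hY (φ j)).aestronglyMeasurable) hYlim_tendsto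
  rw [tendstoInMeasure_iff_dist]
  intro ε hε
  rw [ENNReal.tendsto_nhds_zero]
  intro δ hδ
  have hδ2 : 0 < δ / 2 := ENNReal.half_pos (ne_of_gt hδ)
  obtain ⟨N₀, hN₀⟩ := H (ε/3) (by linarith) (δ/2) hδ2
  have hsub := (ENNReal.tendsto_nhds_zero.mp (tendstoInMeasure_iff_dist.mp htimsub (ε/3) (by linarith)) (δ/2) hδ2)
  obtain ⟨K₀, hK₀⟩ := eventually_atTop.mp hsub
  set k := max K₀ N₀ with hk
  have hφk : N₀ ≤ φ k := le_trans (le_max_right _ _) (hφmono.le_apply)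
  filter_upwards [eventually_ge_atTop N₀] with n hn
  have hincl : {ω | ε ≤ dist (Y n ω) (Ylim ω)} ⊆
      {ω | ε/3 < dist (Y n ω) (Y (φ k) ω)} ∪ {ω | ε/3 ≤ dist (Y (φ k) ω) (Ylim ω)} := by
    intro ω hω
    simp only [Set.mem_setOf_eq, Set.mem_union] at *
    by_contra hcon
    push_neg at hcon
    have := dist_triangle (Y n ω) (Y (φ k) ω) (Ylim ω)
    have h1 := hcon.1
    have h2 := hcon.2
    linarith
  calc P {ω | ε ≤ dist (Y n ω) (Ylim ω)} ≤
      P ({ω | ε/3 < dist (Y n ω) (Y (φ k) ω)} ∪ {ω | ε/3 ≤ dist (Y (φ k) ω) (Ylim ω)}) :=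
        measure_mono hincl
    _ ≤ P {ω | ε/3 < dist (Y n ω) (Y (φ k) ω)} + P {ω | ε/3 ≤ dist (Y (φ k) ω) (Ylim ω)} :=
        measure_union_le _ _
    _ ≤ δ/2 + δ/2 := add_le_add (le_of_lt (hN₀ n hn (φ k) hφk)) (hK₀ k (le_max_left _ _))
    _ = δ := ENNReal.add_halves δ

lemma gk_cauchy {X : Type*} [MetricSpace X] [SecondCountableTopology X]
    [MeasurableSpace X] [BorelSpace X]
    {Ω : Type*} [MeasurableSpace Ω] (P : Measure Ω) [IsProbabilityMeasure P]
    (Y : ℕ → Ω → X) (hY : ∀ n, Measurable (Y n))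
    (h2 : ∀ n m : ℕ → ℕ, StrictMono n → StrictMono m →
      ∃ k : ℕ → ℕ, StrictMono k ∧
        ∃ μ : Measure (X × X), IsProbabilityMeasure μ ∧
          μ {p : X × X | p.1 = p.2} = 1 ∧
          ∀ g : BoundedContinuousFunction (X × X) ℝ,
            Tendsto (fun j => ∫ ω, g (Y (n (k j)) ω, Y (m (k j)) ω) ∂P) atTop
              (nhds (∫ p, g p ∂μ))) :
    ∀ ε : ℝ, 0 < ε → ∀ δ : ℝ≥0∞, 0 < δ → ∃ N, ∀ p, N ≤ p → ∀ q, N ≤ q →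
      P {ω | ε < dist (Y p ω) (Y q ω)} < δ := by
  by_contra hc
  push_neg at hc
  obtain ⟨ε, hε, δ, hδ, hbad⟩ := hc
  choose p hp q hq hd using hbad
  let t : ℕ → ℕ := fun i => Nat.rec 0 (fun i ih => max (p ih) (q ih) + 1) i
  have ht : ∀ i, t (i+1) = max (p (t i)) (q (t i)) + 1 := fun i => rfl
  set n : ℕ → ℕ := fun i => p (t i) with hn
  set m : ℕ → ℕ := fun i => q (t i) with hm
  have hnmono : StrictMono n := strictMono_nat_of_lt_succ fun i => by
    have h1 : n i < t (i+1) := by rw [ht]; exact Nat.lt_succ_of_le (le_max_left _ _)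
    exact lt_of_lt_of_le h1 (hp (t (i+1)))
  have hmmono : StrictMono m := strictMono_nat_of_lt_succ fun i => by
    have h1 : m i < t (i+1) := by rw [ht]; exact Nat.lt_succ_of_le (le_max_right _ _)
    exact lt_of_lt_of_le h1 (hq (t (i+1)))
  obtain ⟨k, hkmono, μ, hμprob, hμdiag, hμconv⟩ := h2 n m hnmono hmmono
  have hpair : ∀ j, Measurable (fun ω => (Y (n (k j)) ω, Y (m (k j)) ω)) :=
    fun j => (hY _).prodMk (hY _)
  have hinst : ∀ j, IsProbabilityMeasure (P.map (fun ω => (Y (n (k j)) ω, Y (m (k j)) ω))) :=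
    fun j => Measure.isProbabilityMeasure_map (hpair j).aemeasurable
  let ν : ℕ → ProbabilityMeasure (X × X) := fun j =>
    ⟨P.map (fun ω => (Y (n (k j)) ω, Y (m (k j)) ω)), hinst j⟩
  let μP : ProbabilityMeasure (X × X) := ⟨μ, hμprob⟩
  have hν : Tendsto ν atTop (𝓝 μP) := by
    rw [ProbabilityMeasure.tendsto_iff_forall_integral_tendsto]
    intro g
    have heq : ∀ j, ∫ x, g x ∂(ν j : Measure (X × X)) =
        ∫ ω, g (Y (n (k j)) ω, Y (m (k j)) ω) ∂P := fun j =>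
      integral_map (hpair j).aemeasurable g.continuous.aestronglyMeasurable
    simp only [heq]
    exact hμconv g
  have hFclosed : IsClosed {x : X × X | ε ≤ dist x.1 x.2} :=
    isClosed_le continuous_const continuous_dist
  have hlimsup := ProbabilityMeasure.limsup_measure_closed_le_of_tendsto hν hFclosed
  have hdiagmeas : MeasurableSet {x : X × X | x.1 = x.2} :=
    (isClosed_eq continuous_fst continuous_snd).measurableSet
  have hμF : (μP : Measure (X × X)) {x : X × X | ε ≤ dist x.1 x.2} = 0 := by
    have hsub : {x : X × X | ε ≤ dist x.1 x.2} ⊆ {x : X × X | x.1 = x.2}ᶜ := by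
      intro x hx heq2
      rw [Set.mem_setOf_eq] at hx
      have : dist x.1 x.2 = 0 := by
        have hxe : x.1 = x.2 := heq2
        rw [hxe, dist_self]
      linarith
    refine le_antisymm (le_trans (measure_mono hsub) ?_) zero_le
    have : (μP : Measure (X × X)) {x : X × X | x.1 = x.2}ᶜ = 0 := by
      rw [measure_compl hdiagmeas (measure_ne_top _ _)]
      have h1 : (μP : Measure (X × X)) {x : X × X | x.1 = x.2} = 1 := hμdiag
      rw [h1]
      simp [measure_univ]
    rw [this]
  have hge : ∀ j, δ ≤ (ν j : Measure (X × X)) {x : X × X | ε ≤ dist x.1 x.2} := by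
    intro j
    have hνeq : (ν j : Measure (X × X)) {x : X × X | ε ≤ dist x.1 x.2} =
        P {ω | ε ≤ dist (Y (n (k j)) ω) (Y (m (k j)) ω)} := by
      show P.map _ _ = _
      rw [Measure.map_apply (hpair j) hFclosed.measurableSet]
      rfl
    rw [hνeq]
    exact le_trans (hd (t (k j)))
      (measure_mono fun ω hω => le_of_lt (Set.mem_setOf_eq ▸ hω))
  have hcontra : δ ≤ (0:ℝ≥0∞) := by
    calc δ = limsup (fun _ : ℕ => δ) atTop := (limsup_const δ).symm
    _ ≤ limsup (fun j => (ν j : Measure (X × X)) {x : X × X | ε ≤ dist x.1 x.2}) atTop :=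
        limsup_le_limsup (Eventually.of_forall hge)
    _ ≤ 0 := hμF ▸ hlimsup
  exact absurd hcontra (not_le.mpr hδ)

/-- Gyöngy–Krylov characterization of convergence in probability on a
Polish space. A sequence `(Y_n)` of `X`-valued random variables converges in
probability to some random variable `Y` if and only if every pair of subsequences of
joint laws has a further subsequence converging weakly to a probability measure
concentrated on the diagonal. -/
theorem gyongy_krylov_polish
    {X : Type*} [MetricSpace X] [CompleteSpace X] [SecondCountableTopology X]
    [MeasurableSpace X] [BorelSpace X]
    {Ω : Type*} [MeasurableSpace Ω] (P : Measure Ω) [IsProbabilityMeasure P]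
    (Y : ℕ → Ω → X) (hY : ∀ n, Measurable (Y n)) :
    (∃ Ylim : Ω → X, Measurable Ylim ∧
      ∀ ε : ℝ, 0 < ε →
        Tendsto (fun n => P {ω | ε < dist (Y n ω) (Ylim ω)}) atTop (nhds 0)) ↔
    (∀ n m : ℕ → ℕ, StrictMono n → StrictMono m →
      ∃ k : ℕ → ℕ, StrictMono k ∧
        ∃ μ : Measure (X × X), IsProbabilityMeasure μ ∧
          μ {p : X × X | p.1 = p.2} = 1 ∧
          ∀ g : BoundedContinuousFunction (X × X) ℝ,
            Tendsto (fun j => ∫ ω, g (Y (n (k j)) ω, Y (m (k j)) ω) ∂P) atTop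
              (nhds (∫ p, g p ∂μ))) := by
  constructor
  · rintro ⟨Ylim, hYlim_meas, hconv⟩ n m hn hm
    have htim : TendstoInMeasure P Y atTop Ylim := gk_tim P Y Ylim hconv
    -- subsequence along n converging a.e.
    have htimn : TendstoInMeasure P (fun i => Y (n i)) atTop Ylim :=
      fun ε hε => (htim ε hε).comp hn.tendsto_atTop
    obtain ⟨k₁, hk₁, hae₁⟩ := htimn.exists_seq_tendsto_ae
    have htimm : TendstoInMeasure P (fun j => Y (m (k₁ j))) atTop Ylim :=
      fun ε hε => (htim ε hε).comp ((hm.comp hk₁).tendsto_atTop)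
    obtain ⟨k₂, hk₂, hae₂⟩ := htimm.exists_seq_tendsto_ae
    refine ⟨k₁ ∘ k₂, hk₁.comp hk₂, P.map (fun ω => (Ylim ω, Ylim ω)), ?_, ?_, ?_⟩
    · exact Measure.isProbabilityMeasure_map (hYlim_meas.prodMk hYlim_meas).aemeasurable
    · rw [Measure.map_apply (hYlim_meas.prodMk hYlim_meas)
        ((isClosed_eq continuous_fst continuous_snd).measurableSet)]
      have : (fun ω => (Ylim ω, Ylim ω)) ⁻¹' {p : X × X | p.1 = p.2} = Set.univ := by
        ext ω; simp
      rw [this, measure_univ]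
    · intro g
      have hμint : ∫ p, g p ∂(P.map (fun ω => (Ylim ω, Ylim ω))) =
          ∫ ω, g (Ylim ω, Ylim ω) ∂P :=
        integral_map (hYlim_meas.prodMk hYlim_meas).aemeasurable
          g.continuous.aestronglyMeasurable
      rw [hμint]
      have haepair : ∀ᵐ ω ∂P, Tendsto
          (fun j => (Y (n (k₁ (k₂ j))) ω, Y (m (k₁ (k₂ j))) ω)) atTop
          (𝓝 (Ylim ω, Ylim ω)) := by
        filter_upwards [hae₁, hae₂] with ω h1 h2
        exact (h1.comp hk₂.tendsto_atTop).prodMk_nhds h2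
      refine tendsto_integral_of_dominated_convergence (fun _ => ‖g‖)
        (fun j => ((g.continuous.measurable.comp
          ((hY _).prodMk (hY _))).aestronglyMeasurable))
        (integrable_const _) (fun j => Eventually.of_forall fun ω => g.norm_coe_le_norm _) ?_
      filter_upwards [haepair] with ω hω
      exact (g.continuous.tendsto _).comp hω
  · intro h2
    obtain ⟨Ylim, hmeas, htim⟩ := gk_exists_limit P Y hY (gk_cauchy P Y hY h2)
    exact ⟨Ylim, hmeas, fun ε hε => gk_tim' P Y Ylim htim ε hε⟩
end
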